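/- Fix n ≥ 2 and l ≥ 1. (i) For every sequence s ∈ B_l^ℕ, the infinite tableau T_{ρ(s)}(s) is nonmovable. (ii) For every h ∈ {0,1,…,l}^ℕ, the assignment s ↦ T_h(s) defines a bijection from ρ^{−1}(h) onto the set of nonmovable tableaux of shape κ̃(h) with entries in {1,…,n}. -/

import Mathlib

/-!
Statement 2: spectral decomposition of the path space; the map
`s ↦ T_{ρ(s)}(s)` and the bijection `ρ⁻¹(h) ≃ NMT(κ̃(h))`.

Infinite skew diagrams `κ̃(h)` are encoded by row data indexed by `ℕ`
**from the bottom**: the `i`-th row (from the bottom) has `l` boxes and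
occupies the (0-indexed) columns `O i, …, O i + l - 1`, where
`O 0 = 0`, `O (i+1) = O i + h i`.  A filling is `f : ℕ → ℕ → ℕ`, `f i k`
being the entry of the `k`-th box of the `i`-th row from the bottom;
entries are positive inside the shape and `0` outside.  The tableau
`T_h(s)` of a path `s` is `s` itself, viewed as a filling of `κ̃(h)`.
-/

def H1 (a b : ℕ) : ℕ := if a < b then 0 else 1

noncomputable def Hl (l : ℕ) (a b : ℕ → ℕ) : ℕ :=
  Finset.univ.inf' ⟨1, Finset.mem_univ _⟩
    (fun σ : Equiv.Perm (Fin l) => ∑ i : Fin l, H1 (a i) (b (σ i)))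

def IsBRow (n l : ℕ) (a : ℕ → ℕ) : Prop :=
  (∀ k, k + 1 < l → a k ≤ a (k + 1)) ∧ (∀ k, k < l → 1 ≤ a k ∧ a k ≤ n) ∧
    (∀ k, l ≤ k → a k = 0)

/-- an element of `B_l^ℕ`. -/
def IsPath (n l : ℕ) (s : ℕ → ℕ → ℕ) : Prop := ∀ i, IsBRow n l (s i)

/-- the local energy map `ρ(s)_i = H_l(s_{i+1}, s_i)`. -/
noncomputable def locEnergy (l : ℕ) (s : ℕ → ℕ → ℕ) : ℕ → ℕ :=
  fun i => Hl l (s (i + 1)) (s i)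

/-- offsets of the rows of `κ̃(h)` (rows indexed from the bottom). -/
def Ooff (h : ℕ → ℕ) : ℕ → ℕ := fun i => ∑ j ∈ Finset.range i, h j

def InfIsFilling (len : ℕ → ℕ) (f : ℕ → ℕ → ℕ) : Prop :=
  (∀ i k, k < len i → 0 < f i k) ∧ (∀ i k, len i ≤ k → f i k = 0)

def InfEntriesLE (n : ℕ) (f : ℕ → ℕ → ℕ) : Prop := ∀ i k, f i k ≤ n

def InfRowsWeak (len : ℕ → ℕ) (f : ℕ → ℕ → ℕ) : Prop :=
  ∀ i k, k + 1 < len i → f i k ≤ f i (k + 1)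

/-- columns strictly increase from top to bottom; row `i+1` lies above row `i`. -/
def InfColsStrict (off len : ℕ → ℕ) (f : ℕ → ℕ → ℕ) : Prop :=
  ∀ i j, off (i + 1) ≤ j → j < off (i + 1) + len (i + 1) →
    off i ≤ j → j < off i + len i →
    f (i + 1) (j - off (i + 1)) < f i (j - off i)

def InfSemistandard (off len : ℕ → ℕ) (f : ℕ → ℕ → ℕ) : Prop :=
  InfRowsWeak len f ∧ InfColsStrict off len f

/-- the row data describes a skew diagram (rows listed bottom to top). -/
def InfIsSkewShape (off len : ℕ → ℕ) : Prop :=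
  ∀ i, off i ≤ off (i + 1) ∧ off i + len i ≤ off (i + 1) + len (i + 1)

def InfShift (off : ℕ → ℕ) (i0 : ℕ) : ℕ → ℕ := fun i => if i = i0 then off i - 1 else off i

def InfNonmovable (off len : ℕ → ℕ) (f : ℕ → ℕ → ℕ) : Prop :=
  InfSemistandard off len f ∧
  ∀ i0, 0 < len i0 →
    ¬ (0 < off i0 ∧ InfIsSkewShape (InfShift off i0) len ∧
        InfSemistandard (InfShift off i0) len f)

/-- the set of nonmovable tableaux of shape `κ̃(h)` with entries in `{1,…,n}`. -/
def NMTinf (n l : ℕ) (h : ℕ → ℕ) : Set (ℕ → ℕ → ℕ) :=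
  {f | InfIsFilling (fun _ => l) f ∧ InfEntriesLE n f ∧
    InfNonmovable (Ooff h) (fun _ => l) f}

/-- the semistandardness condition for a pair of rows at relative offset `h`. -/
def Pcond (l : ℕ) (a b : ℕ → ℕ) (h : ℕ) : Prop := ∀ k, k + h < l → a k < b (k + h)

noncomputable def Epair (l : ℕ) (a b : ℕ → ℕ) : ℕ := sInf {h | Pcond l a b h}

lemma Pcond_top (l : ℕ) (a b : ℕ → ℕ) : Pcond l a b l := fun k hk => absurd hk (by omega)

lemma Epair_mem (l : ℕ) (a b : ℕ → ℕ) : Pcond l a b (Epair l a b) :=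
  Nat.sInf_mem (⟨l, Pcond_top l a b⟩ : Set.Nonempty {h | Pcond l a b h})

lemma Epair_le {l : ℕ} {a b : ℕ → ℕ} {h : ℕ} (hp : Pcond l a b h) : Epair l a b ≤ h :=
  Nat.sInf_le hp

lemma Epair_le_l (l : ℕ) (a b : ℕ → ℕ) : Epair l a b ≤ l := Epair_le (Pcond_top l a b)

lemma not_Pcond_of_lt {l m : ℕ} {a b : ℕ → ℕ} (hm : m < Epair l a b) : ¬ Pcond l a b m :=
  Nat.notMem_of_lt_sInf hm

lemma mono_row {l : ℕ} {a : ℕ → ℕ} (h : ∀ k, k + 1 < l → a k ≤ a (k + 1)) :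
    ∀ k k', k ≤ k' → k' < l → a k ≤ a k' := by
  intro k k' hk hk'
  induction k' with
  | zero =>
    have : k = 0 := by omega
    subst this; exact le_rfl
  | succ m ih =>
    rcases Nat.lt_or_ge k (m + 1) with h1 | h2
    · exact le_trans (ih (Nat.lt_succ_iff.mp h1) (by omega)) (h m hk')
    · have : k = m + 1 := by omega
      subst this; exact le_rfl

lemma Pcond_mono {l : ℕ} {a b : ℕ → ℕ} (hb : ∀ k, k + 1 < l → b k ≤ b (k + 1))
    {d d' : ℕ} (hdd : d ≤ d') (h : Pcond l a b d) : Pcond l a b d' := by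
  intro k hk
  exact lt_of_lt_of_le (h k (by omega)) (mono_row hb _ _ (by omega) (by omega))

lemma card_filter_val_lt (l c : ℕ) (hc : c ≤ l) :
    (Finset.univ.filter fun i : Fin l => (i : ℕ) < c).card = c := by
  have key : (Finset.univ.filter fun i : Fin l => (i : ℕ) < c).card = (Finset.range c).card := by
    refine Finset.card_bij (fun i _ => (i : ℕ)) ?_ ?_ ?_
    · intro i hi
      simp only [Finset.mem_filter] at hi
      exact Finset.mem_range.mpr hi.2
    · intro i _ j _ hij
      exact Fin.val_injective hij
    · intro j hj
      have hj' : j < c := Finset.mem_range.mp hj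
      exact ⟨⟨j, by omega⟩, by simp [hj'], rfl⟩
  rw [key, Finset.card_range]

lemma card_filter_le_val (l c : ℕ) (hc : c ≤ l) :
    (Finset.univ.filter fun i : Fin l => c ≤ (i : ℕ)).card = l - c := by
  have h1 := Finset.card_filter_add_card_filter_not
    (s := (Finset.univ : Finset (Fin l))) (p := fun i : Fin l => (i : ℕ) < c)
  have h2 : (Finset.univ.filter fun i : Fin l => ¬ (i : ℕ) < c)
      = (Finset.univ.filter fun i : Fin l => c ≤ (i : ℕ)) := by
    apply Finset.filter_congr; intro i _; simp [not_lt]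
  rw [card_filter_val_lt l c hc, h2, Finset.card_univ, Fintype.card_fin] at h1
  omega

lemma card_filter_val_le (l c : ℕ) (hc : c < l) :
    (Finset.univ.filter fun i : Fin l => (i : ℕ) ≤ c).card = c + 1 := by
  have h2 : (Finset.univ.filter fun i : Fin l => (i : ℕ) ≤ c)
      = (Finset.univ.filter fun i : Fin l => (i : ℕ) < c + 1) := by
    apply Finset.filter_congr; intro i _; simp [Nat.lt_succ_iff]
  rw [h2, card_filter_val_lt l (c + 1) (by omega)]

lemma Epair_le_cost {l : ℕ} {a b : ℕ → ℕ}
    (ha : ∀ k, k + 1 < l → a k ≤ a (k + 1)) (hb : ∀ k, k + 1 < l → b k ≤ b (k + 1))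
    (σ : Equiv.Perm (Fin l)) :
    Epair l a b ≤ ∑ i : Fin l, H1 (a i) (b (σ i)) := by
  set c := ∑ i : Fin l, H1 (a i) (b (σ i)) with hc
  apply Epair_le
  by_contra hP
  simp only [Pcond, not_forall] at hP
  obtain ⟨k, hkl, hba⟩ := hP
  have hba' : b (k + c) ≤ a k := by omega
  classical
  set A := Finset.univ.filter fun i : Fin l => k ≤ (i : ℕ) with hA
  set B := Finset.univ.filter fun i : Fin l => ((σ i : Fin l) : ℕ) ≤ k + c with hB
  have cardA : A.card = l - k := card_filter_le_val l k (by omega)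
  have cardB : B.card = k + c + 1 := by
    rw [hB]
    rw [show k + c + 1 = (Finset.univ.filter fun j : Fin l => (j : ℕ) ≤ k + c).card from
      (card_filter_val_le l (k + c) hkl).symm]
    refine Finset.card_bij (fun i _ => σ i) ?_ ?_ ?_
    · intro i hi
      simp only [Finset.mem_filter] at hi ⊢
      exact ⟨Finset.mem_univ _, hi.2⟩
    · intro i _ j _ hij
      exact σ.injective hij
    · intro j hj
      simp only [Finset.mem_filter] at hj
      exact ⟨σ.symm j, by simp [hj.2], by simp⟩
  have cardAB : c + 1 ≤ (A ∩ B).card := by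
    have h1 := Finset.card_inter_add_card_union A B
    have h2 : (A ∪ B).card ≤ l := by
      calc (A ∪ B).card ≤ (Finset.univ : Finset (Fin l)).card :=
            Finset.card_le_card (Finset.subset_univ _)
        _ = l := by simp
    omega
  have hone : ∀ i ∈ A ∩ B, H1 (a i) (b (σ i)) = 1 := by
    intro i hi
    simp only [Finset.mem_inter, hA, hB, Finset.mem_filter] at hi
    have h1 : a k ≤ a i := mono_row ha k i hi.1.2 i.isLt
    have h2 : b (σ i) ≤ b (k + c) := mono_row hb _ _ hi.2.2 hkl
    have : ¬ a (i : ℕ) < b ((σ i : Fin l) : ℕ) := by omega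
    simp [H1, this]
  have hsum : (A ∩ B).card ≤ c := by
    calc (A ∩ B).card = ∑ i ∈ A ∩ B, 1 := by simp
      _ = ∑ i ∈ A ∩ B, H1 (a i) (b (σ i)) :=
          Finset.sum_congr rfl (fun i hi => (hone i hi).symm)
      _ ≤ ∑ i : Fin l, H1 (a i) (b (σ i)) :=
          Finset.sum_le_sum_of_subset (Finset.subset_univ _)
      _ = c := rfl
  omega

lemma cost_le_one_sum {l : ℕ} (a b : ℕ → ℕ) (σ : Equiv.Perm (Fin l)) :
    ∑ i : Fin l, H1 (a i) (b (σ i)) ≤ l := by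
  calc ∑ i : Fin l, H1 (a i) (b (σ i)) ≤ ∑ _i : Fin l, 1 := by
        apply Finset.sum_le_sum
        intro i _
        unfold H1; split <;> omega
    _ = l := by simp

lemma Hl_le_Epair {l : ℕ} (hl : 1 ≤ l) {a b : ℕ → ℕ} : Hl l a b ≤ Epair l a b := by
  haveI : NeZero l := ⟨by omega⟩
  set e := Epair l a b with he
  rcases Nat.lt_or_ge e l with hel | hel
  · set σ : Equiv.Perm (Fin l) := Equiv.addRight (⟨e, hel⟩ : Fin l) with hσ
    have hcost : ∑ i : Fin l, H1 (a i) (b (σ i)) ≤ e := by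
      have hterm : ∀ i : Fin l, H1 (a i) (b (σ i)) ≤ if (i : ℕ) + e < l then 0 else 1 := by
        intro i
        by_cases hi : (i : ℕ) + e < l
        · have hv : ((σ i : Fin l) : ℕ) = (i : ℕ) + e := by
            simp only [hσ, Equiv.coe_addRight, Fin.add_def]
            exact Nat.mod_eq_of_lt hi
          have hab : a i < b (i + e) := Epair_mem l a b i hi
          simp only [hi, if_pos, hv, H1, hab, if_true]
          omega
        · simp only [hi, if_neg, not_false_iff]
          unfold H1; split <;> omega
      calc ∑ i : Fin l, H1 (a i) (b (σ i))
          ≤ ∑ i : Fin l, (if (i : ℕ) + e < l then 0 else 1) :=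
            Finset.sum_le_sum (fun i _ => hterm i)
        _ = ∑ i : Fin l, (if l - e ≤ (i : ℕ) then 1 else 0) := by
            apply Finset.sum_congr rfl
            intro i _
            by_cases hi : (i : ℕ) + e < l
            · simp [hi, show ¬ (l - e ≤ (i : ℕ)) by omega]
            · simp [hi, show l - e ≤ (i : ℕ) by omega]
        _ = (Finset.univ.filter fun i : Fin l => l - e ≤ (i : ℕ)).card :=
            (Finset.card_filter _ _).symm
        _ = l - (l - e) := card_filter_le_val l (l - e) (by omega)
        _ = e := by omega
    exact le_trans (Finset.inf'_le _ (Finset.mem_univ σ)) hcost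
  · have := Epair_le_l l a b
    have : e = l := by omega
    rw [this]
    exact le_trans (Finset.inf'_le _ (Finset.mem_univ 1)) (cost_le_one_sum a b 1)

lemma Hl_eq_Epair {l : ℕ} (hl : 1 ≤ l) {a b : ℕ → ℕ}
    (ha : ∀ k, k + 1 < l → a k ≤ a (k + 1)) (hb : ∀ k, k + 1 < l → b k ≤ b (k + 1)) :
    Hl l a b = Epair l a b := by
  refine le_antisymm (Hl_le_Epair hl) ?_
  apply Finset.le_inf'
  intro σ _
  exact Epair_le_cost ha hb σ
lemma Ooff_succ (h : ℕ → ℕ) (i : ℕ) : Ooff h (i + 1) = Ooff h i + h i :=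
  Finset.sum_range_succ h i

lemma Ooff_mono (h : ℕ → ℕ) (i : ℕ) : Ooff h i ≤ Ooff h (i + 1) := by
  rw [Ooff_succ]; omega

lemma colsStrict_iff {l : ℕ} {off : ℕ → ℕ} (hoff : ∀ i, off i ≤ off (i + 1)) (f : ℕ → ℕ → ℕ) :
    InfColsStrict off (fun _ => l) f ↔
      ∀ i, Pcond l (f (i + 1)) (f i) (off (i + 1) - off i) := by
  constructor
  · intro H i k hk
    have H' : ∀ i j, off (i + 1) ≤ j → j < off (i + 1) + l → off i ≤ j → j < off i + l →
        f (i + 1) (j - off (i + 1)) < f i (j - off i) := H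
    have hoi := hoff i
    have h2 := H' i (off (i + 1) + k) le_self_add (by omega) (by omega) (by omega)
    have e1 : off (i + 1) + k - off (i + 1) = k := by omega
    have e2 : off (i + 1) + k - off i = k + (off (i + 1) - off i) := by omega
    rwa [e1, e2] at h2
  · intro H i j hj1 hj2 hj3 hj4
    have hj2' : j < off (i + 1) + l := hj2
    have hj4' : j < off i + l := hj4
    have hoi := hoff i
    have := H i (j - off (i + 1)) (by omega)
    have e : j - off (i + 1) + (off (i + 1) - off i) = j - off i := by omega
    rwa [e] at this

/-- a nonmovable semistandard filling has local offsets equal to `Epair`. -/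
lemma Epair_eq_of_nonmovable {l : ℕ} (h : ℕ → ℕ) (f : ℕ → ℕ → ℕ)
    (hnm : InfNonmovable (Ooff h) (fun _ => l) f) (hl : 1 ≤ l) (i : ℕ) :
    Epair l (f (i + 1)) (f i) = h i := by
  obtain ⟨⟨hrw, hcs⟩, hmove⟩ := hnm
  have hrw' : ∀ j k, k + 1 < l → f j k ≤ f j (k + 1) := hrw
  have hP : ∀ j, Pcond l (f (j + 1)) (f j) (h j) := by
    intro j
    have := (colsStrict_iff (Ooff_mono h) f).mp hcs j
    rwa [Ooff_succ, Nat.add_sub_cancel_left] at this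
  have hle : Epair l (f (i + 1)) (f i) ≤ h i := Epair_le (hP i)
  rcases Nat.lt_or_ge (Epair l (f (i + 1)) (f i)) (h i) with hlt | hge
  · exfalso
    have hi1 : 1 ≤ h i := by omega
    have hov : ∀ j, InfShift (Ooff h) (i + 1) j
        = if j = i + 1 then Ooff h (i + 1) - 1 else Ooff h j := by
      intro j
      unfold InfShift
      split_ifs with hj
      · rw [hj]
      · rfl
    have hOpos : 0 < Ooff h (i + 1) := by rw [Ooff_succ]; omega
    have hmono' : ∀ j, InfShift (Ooff h) (i + 1) j ≤ InfShift (Ooff h) (i + 1) (j + 1) := by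
      intro j
      rw [hov j, hov (j + 1)]
      rcases eq_or_ne j (i + 1) with rfl | hj1
      · rw [if_pos rfl, if_neg (show ¬ (i + 1 + 1 = i + 1) by omega)]
        have e1 := Ooff_succ h (i + 1)
        omega
      · rw [if_neg hj1]
        rcases eq_or_ne (j + 1) (i + 1) with he | hj2
        · rw [if_pos he]
          have : j = i := by omega
          subst this
          have e1 := Ooff_succ h j
          omega
        · rw [if_neg hj2]
          exact Ooff_mono h j
    refine hmove (i + 1) (by exact hl) ⟨hOpos, ?_, hrw, ?_⟩
    · intro j
      refine ⟨hmono' j, ?_⟩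
      show InfShift (Ooff h) (i + 1) j + l ≤ InfShift (Ooff h) (i + 1) (j + 1) + l
      exact Nat.add_le_add_right (hmono' j) l
    · refine (colsStrict_iff hmono' f).mpr ?_
      intro j
      by_cases hji : j = i
      · subst hji
        have e : InfShift (Ooff h) (j + 1) (j + 1) - InfShift (Ooff h) (j + 1) j = h j - 1 := by
          rw [hov (j + 1), hov j, if_pos rfl, if_neg (show ¬ (j = j + 1) by omega)]
          have e1 := Ooff_succ h j
          omega
        rw [e]
        exact Pcond_mono (fun k hk => hrw' j k hk) (by omega) (Epair_mem l (f (j + 1)) (f j))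
      · have hd : h j ≤ InfShift (Ooff h) (i + 1) (j + 1) - InfShift (Ooff h) (i + 1) j := by
          rw [hov (j + 1), hov j]
          rcases eq_or_ne j (i + 1) with rfl | hj1
          · rw [if_neg (show ¬ (i + 1 + 1 = i + 1) by omega), if_pos rfl]
            have e1 := Ooff_succ h (i + 1)
            omega
          · rw [if_neg (show ¬ (j + 1 = i + 1) by omega), if_neg hj1]
            have e1 := Ooff_succ h j
            omega
        exact Pcond_mono (fun k hk => hrw' j k hk) hd (hP j)
  · omega

lemma nonmovable_of_Epair {l : ℕ} (hl : 1 ≤ l) (h : ℕ → ℕ) (s : ℕ → ℕ → ℕ)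
    (hrw : InfRowsWeak (fun _ => l) s)
    (heq : ∀ i, Epair l (s (i + 1)) (s i) = h i) :
    InfNonmovable (Ooff h) (fun _ => l) s := by
  constructor
  · refine ⟨hrw, (colsStrict_iff (Ooff_mono h) s).mpr ?_⟩
    intro i
    rw [Ooff_succ, Nat.add_sub_cancel_left, ← heq i]
    exact Epair_mem l (s (i + 1)) (s i)
  · rintro i0 _ ⟨hpos, hskew, hss⟩
    match i0, hpos with
    | 0, hpos => simp [Ooff] at hpos
    | (i + 1), hpos =>
      have hmono' : ∀ j, InfShift (Ooff h) (i + 1) j ≤ InfShift (Ooff h) (i + 1) (j + 1) :=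
        fun j => (hskew j).1
      have hP := (colsStrict_iff hmono' s).mp hss.2 i
      have hov1 : InfShift (Ooff h) (i + 1) (i + 1) = Ooff h (i + 1) - 1 := by
        unfold InfShift; rw [if_pos rfl]
      have hov2 : InfShift (Ooff h) (i + 1) i = Ooff h i := by
        unfold InfShift; rw [if_neg (show ¬ (i = i + 1) by omega)]
      have hskewi := hmono' i
      rw [hov1, hov2] at hP hskewi
      have e1 := Ooff_succ h i
      have hi1 : 1 ≤ h i := by omega
      have e2 : Ooff h (i + 1) - 1 - Ooff h i = h i - 1 := by omega
      rw [e2] at hP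
      exact not_Pcond_of_lt (show h i - 1 < Epair l (s (i + 1)) (s i) by rw [heq i]; omega) hP


/-- (i) for every `s ∈ B_l^ℕ`, the tableau `T_{ρ(s)}(s)` is
nonmovable; (ii) for every `h ∈ {0,…,l}^ℕ`, the assignment `s ↦ T_h(s)`
(which, in this encoding, is the identity on fillings) is a bijection from
`ρ⁻¹(h)` onto the nonmovable tableaux of shape `κ̃(h)` with entries in `{1,…,n}`. -/
theorem path_tableau_bijection (n l : ℕ) (hn : 2 ≤ n) (hl : 1 ≤ l) :
    (∀ s : ℕ → ℕ → ℕ, IsPath n l s →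
      InfNonmovable (Ooff (locEnergy l s)) (fun _ => l) s) ∧
    (∀ h : ℕ → ℕ, (∀ i, h i ≤ l) →
      Set.BijOn (fun s => s) {s | IsPath n l s ∧ locEnergy l s = h}
        (NMTinf n l h)) := by
  have rowsweak : ∀ s : ℕ → ℕ → ℕ, IsPath n l s → InfRowsWeak (fun _ => l) s :=
    fun s hs i k hk => (hs i).1 k hk
  have part1 : ∀ s : ℕ → ℕ → ℕ, IsPath n l s →
      InfNonmovable (Ooff (locEnergy l s)) (fun _ => l) s := by
    intro s hs
    refine nonmovable_of_Epair hl _ s (rowsweak s hs) ?_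
    intro i
    exact (Hl_eq_Epair hl ((hs (i + 1)).1) ((hs i).1)).symm
  refine ⟨part1, ?_⟩
  intro h hh
  refine ⟨?_, ?_, ?_⟩
  · rintro s ⟨hs, hes⟩
    subst hes
    refine ⟨⟨fun i k hk => ((hs i).2.1 k hk).1, fun i k hk => (hs i).2.2 k hk⟩, ?_, part1 s hs⟩
    intro i k
    rcases Nat.lt_or_ge k l with hc | hc
    · exact ((hs i).2.1 k hc).2
    · have := (hs i).2.2 k hc
      show s i k ≤ n
      omega
  · intro a _ b _ hab
    exact hab
  · intro f hf
    obtain ⟨hfill, hle, hnm⟩ := hf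
    have hrw : InfRowsWeak (fun _ => l) f := hnm.1.1
    refine ⟨f, ⟨?_, ?_⟩, rfl⟩
    · intro i
      exact ⟨fun k hk => hrw i k hk, fun k hk => ⟨hfill.1 i k hk, hle i k⟩,
        fun k hk => hfill.2 i k hk⟩
    · funext i
      show Hl l (f (i + 1)) (f i) = h i
      exact (Hl_eq_Epair hl (fun k hk => hrw (i + 1) k hk) (fun k hk => hrw i k hk)).trans
        (Epair_eq_of_nonmovable h f hnm hl i)
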